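/- Let K be a field. For all d, j, c ∈ ℕ: M_{d+2}^0(j + c) ≥ (M_d^0(j))^{c+1}. Concretely, if there is a sequence of M_d^0(j) monomial ideals in K[X_d, …, X_0, Y], each of degree ≤ j, with no earlier ideal containing a later one, then there is such a 'bad' sequence of (M_d^0(j))^{c+1} monomial ideals of degree ≤ j + c in K[X_{d+2}, X_{d+1}, X_d, …, X_0, Y]. -/

import Mathlib

/-- `I` is a monomial ideal generated by monomials of total degree at most `deg`. -/
def MonGen {K : Type*} [Field K] {n : ℕ} (I : Ideal (MvPolynomial (Fin n) K)) (deg : ℕ) : Prop :=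
  ∃ S : Set (Fin n →₀ ℕ), (∀ s ∈ S, (s.sum fun _ e => e) ≤ deg) ∧
    I = Ideal.span ((fun s => (MvPolynomial.monomial s (1 : K))) '' S)

/-- `Mnum K d f l` : the least `M` (infimum of the set of such `M`) such that every
sequence `I_0, …, I_M` of monomial ideals in the `d+2`-variable polynomial ring over `K`
with `deg (I i) ≤ l + f i` for all `i ≤ M` admits `i < j ≤ M` with `I j ⊆ I i`. -/
noncomputable def Mnum (K : Type*) [Field K] (d : ℕ) (f : ℕ → ℕ) (l : ℕ) : ℕ :=
  sInf {M | ∀ I : ℕ → Ideal (MvPolynomial (Fin (d + 2)) K),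
    (∀ i ≤ M, MonGen (I i) (l + f i)) →
    ∃ i j, i < j ∧ j ≤ M ∧ I j ≤ I i}

/-! ### Auxiliary lemmas -/

/-- Base-`N` digit comparison: if `i < i' < N^(c+1)` then some digit of `i` is strictly
smaller than the corresponding digit of `i'`. -/
lemma digit_lex {N c i i' : ℕ} (hi' : i' < N ^ (c + 1)) (hii : i < i') :
    ∃ t ≤ c, i / N ^ (c - t) % N < i' / N ^ (c - t) % N := by
  have hN : 0 < N := by
    rcases Nat.eq_zero_or_pos N with h | h
    · subst h; simp at hi'
    · exact h
  have hex : ∃ s, i / N ^ (c - s) ≠ i' / N ^ (c - s) := by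
    refine ⟨c, ?_⟩
    simpa using Nat.ne_of_lt hii
  obtain ⟨t, htdef⟩ : ∃ t, Nat.find hex = t := ⟨_, rfl⟩
  have ht : i / N ^ (c - t) ≠ i' / N ^ (c - t) := htdef ▸ Nat.find_spec hex
  have htc : t ≤ c := htdef ▸ Nat.find_min' hex (by simpa using Nat.ne_of_lt hii)
  have hdivle : i / N ^ (c - t) ≤ i' / N ^ (c - t) := Nat.div_le_div_right hii.le
  have hlt : i / N ^ (c - t) < i' / N ^ (c - t) := lt_of_le_of_ne hdivle ht
  refine ⟨t, htc, ?_⟩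
  rcases Nat.eq_zero_or_pos t with h0 | hpos
  · subst h0
    simp only [Nat.sub_zero] at hlt ⊢
    have h1 : i' / N ^ c < N := by
      rw [Nat.div_lt_iff_lt_mul (pow_pos hN c)]
      calc i' < N ^ (c + 1) := hi'
        _ = N * N ^ c := by ring
    have h2 : i / N ^ c < N := lt_of_le_of_lt (Nat.div_le_div_right hii.le) h1
    rw [Nat.mod_eq_of_lt h2, Nat.mod_eq_of_lt h1]
    exact hlt
  · obtain ⟨s, rfl⟩ := Nat.exists_eq_add_of_lt hpos
    simp only [Nat.zero_add] at *
    have hq : i / N ^ (c - s) = i' / N ^ (c - s) := by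
      have := Nat.find_min hex (m := s) (by omega)
      simpa using this
    have e1 : ∀ x : ℕ, x / N ^ (c - (s + 1)) / N = x / N ^ (c - s) := by
      intro x
      rw [Nat.div_div_eq_div_mul, ← pow_succ, show c - (s + 1) + 1 = c - s from by omega]
    have hdeq : i / N ^ (c - (s + 1)) / N = i' / N ^ (c - (s + 1)) / N := by
      rw [e1, e1, hq]
    set a := i / N ^ (c - (s + 1)) with ha
    set b := i' / N ^ (c - (s + 1)) with hb
    rw [← Nat.div_add_mod a N, ← Nat.div_add_mod b N, hdeq] at hlt
    exact Nat.lt_of_add_lt_add_left hlt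

/-- Pointwise bound: each value of a finsupp is at most its total sum. -/
lemma finsupp_apply_le_sum {n : ℕ} (f : Fin n →₀ ℕ) (x : Fin n) :
    f x ≤ f.sum fun _ e => e := by
  by_cases h : x ∈ f.support
  · exact Finset.single_le_sum (fun i _ => Nat.zero_le _) h
  · simp [Finsupp.notMem_support_iff.mp h]

/-- A monomial ideal generated in degree `≤ L` is determined by its degree-`≤ L` monomials. -/
lemma monGen_eq_span {K : Type*} [Field K] {n L : ℕ} {I : Ideal (MvPolynomial (Fin n) K)}
    (h : MonGen I L) :
    I = Ideal.span ((fun s => (MvPolynomial.monomial s (1 : K))) ''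
      {s | (s.sum fun _ e => e) ≤ L ∧ MvPolynomial.monomial s (1 : K) ∈ I}) := by
  obtain ⟨S, hS, hI⟩ := h
  apply le_antisymm
  · conv_lhs => rw [hI]
    apply Ideal.span_mono
    apply Set.image_mono
    intro s hs
    exact ⟨hS s hs, by rw [hI]; exact Ideal.subset_span ⟨s, hs, rfl⟩⟩
  · rw [Ideal.span_le]
    rintro p ⟨s, ⟨-, hs2⟩, rfl⟩
    exact hs2

/-- The set defining `Mnum` is nonempty (pigeonhole: there are only finitely many
monomial ideals generated in bounded degree). -/
lemma exists_bound (K : Type*) [Field K] (n L : ℕ) :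
    ∃ M : ℕ, ∀ I : ℕ → Ideal (MvPolynomial (Fin n) K),
      (∀ i ≤ M, MonGen (I i) L) →
      ∃ i j, i < j ∧ j ≤ M ∧ I j ≤ I i := by
  classical
  set D := {s : Fin n →₀ ℕ // (s.sum fun _ e => e) ≤ L} with hD
  have : Finite D := by
    apply Finite.of_injective (fun s : D => fun x : Fin n =>
      (⟨s.1 x, Nat.lt_succ_of_le (le_trans (finsupp_apply_le_sum s.1 x) s.2)⟩ : Fin (L + 1)))
    intro s s' h
    ext x
    exact congrArg Fin.val (congrFun h x)
  have : Finite (Set D) := inferInstance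
  haveI : Fintype (Set D) := Fintype.ofFinite _
  refine ⟨Fintype.card (Set D), ?_⟩
  intro I hI
  set f : Fin (Fintype.card (Set D) + 1) → Set D :=
    fun i => {s : D | MvPolynomial.monomial s.1 (1 : K) ∈ I i} with hf
  obtain ⟨x, y, hxy, hfeq⟩ := Fintype.exists_ne_map_eq_of_card_lt f (by simp)
  have key : ∀ x y : Fin (Fintype.card (Set D) + 1), f x = f y → I x = I y := by
    intro x y hxy'
    have hsets : {s : Fin n →₀ ℕ | (s.sum fun _ e => e) ≤ L ∧
          MvPolynomial.monomial s (1 : K) ∈ I ↑x} =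
        {s : Fin n →₀ ℕ | (s.sum fun _ e => e) ≤ L ∧
          MvPolynomial.monomial s (1 : K) ∈ I ↑y} := by
      ext s
      simp only [Set.mem_setOf_eq]
      constructor
      · rintro ⟨h1, h2⟩
        exact ⟨h1, (Set.ext_iff.mp hxy' ⟨s, h1⟩).mp h2⟩
      · rintro ⟨h1, h2⟩
        exact ⟨h1, (Set.ext_iff.mp hxy' ⟨s, h1⟩).mpr h2⟩
    rw [monGen_eq_span (hI x (Nat.lt_succ_iff.mp x.2)),
        monGen_eq_span (hI y (Nat.lt_succ_iff.mp y.2)), hsets]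
  rcases lt_or_gt_of_ne hxy with h | h
  · exact ⟨x, y, h, Nat.lt_succ_iff.mp y.2, (key x y hfeq).ge⟩
  · exact ⟨y, x, h, Nat.lt_succ_iff.mp x.2, (key x y hfeq).le⟩

section Construct

variable {K : Type*} [Field K] {n : ℕ}

/-- The shift-and-embed operation on exponent vectors. -/
noncomputable def embF (n c k : ℕ) (s : Fin n →₀ ℕ) : Fin (n + 2) →₀ ℕ :=
  Finsupp.embDomain (Fin.castLEEmb (Nat.le_add_right n 2)) s
    + Finsupp.single (⟨n, by omega⟩ : Fin (n + 2)) k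
    + Finsupp.single (⟨n + 1, by omega⟩ : Fin (n + 2)) (c - k)

lemma embF_apply_u (c k : ℕ) (s : Fin n →₀ ℕ) :
    embF n c k s ⟨n, by omega⟩ = k := by
  have h1 : Finsupp.embDomain (Fin.castLEEmb (Nat.le_add_right n 2)) s
      (⟨n, by omega⟩ : Fin (n + 2)) = 0 := by
    apply Finsupp.embDomain_notin_range
    rintro ⟨x, hx⟩
    have := congrArg Fin.val hx
    simp at this
    omega
  simp [embF, h1, Finsupp.single_eq_of_ne (show (⟨n + 1, by omega⟩ : Fin (n + 2)) ≠ ⟨n, by omega⟩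
    from by simp [Fin.ext_iff])]

lemma embF_apply_v (c k : ℕ) (s : Fin n →₀ ℕ) :
    embF n c k s ⟨n + 1, by omega⟩ = c - k := by
  have h1 : Finsupp.embDomain (Fin.castLEEmb (Nat.le_add_right n 2)) s
      (⟨n + 1, by omega⟩ : Fin (n + 2)) = 0 := by
    apply Finsupp.embDomain_notin_range
    rintro ⟨x, hx⟩
    have := congrArg Fin.val hx
    simp at this
    omega
  simp [embF, h1, Finsupp.single_eq_of_ne (show (⟨n, by omega⟩ : Fin (n + 2)) ≠ ⟨n + 1, by omega⟩
    from by simp [Fin.ext_iff])]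

lemma embF_apply_castLE (c k : ℕ) (s : Fin n →₀ ℕ) (x : Fin n) :
    embF n c k s (Fin.castLE (Nat.le_add_right n 2) x) = s x := by
  have hx1 : Fin.castLE (Nat.le_add_right n 2) x ≠ (⟨n, by omega⟩ : Fin (n + 2)) := by
    simp [Fin.ext_iff]; omega
  have hx2 : Fin.castLE (Nat.le_add_right n 2) x ≠ (⟨n + 1, by omega⟩ : Fin (n + 2)) := by
    simp [Fin.ext_iff]; omega
  have h1 : Finsupp.embDomain (Fin.castLEEmb (Nat.le_add_right n 2)) s
      (Fin.castLE (Nat.le_add_right n 2) x) = s x :=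
    Finsupp.embDomain_apply_self (Fin.castLEEmb (Nat.le_add_right n 2)) s x
  simp [embF, h1, Finsupp.single_eq_of_ne' (Ne.symm hx1), Finsupp.single_eq_of_ne' (Ne.symm hx2)]

lemma embF_sum (c k : ℕ) (hk : k ≤ c) (s : Fin n →₀ ℕ) :
    ((embF n c k s).sum fun _ e => e) = (s.sum fun _ e => e) + c := by
  rw [embF, Finsupp.sum_add_index' (fun _ => rfl) (fun _ _ _ => rfl),
      Finsupp.sum_add_index' (fun _ => rfl) (fun _ _ _ => rfl),
      Finsupp.sum_embDomain, Finsupp.sum_single_index rfl, Finsupp.sum_single_index rfl]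
  omega

/-- The main construction: from a bad sequence of length `N` in `n` variables,
degrees `≤ j`, construct a bad sequence of length `N^(c+1)` in `n + 2` variables,
degrees `≤ j + c`. -/
lemma bad_construct (N j c : ℕ) (I : ℕ → Ideal (MvPolynomial (Fin n) K))
    (hgen : ∀ i < N, MonGen (I i) j)
    (hbad : ∀ i i', i < i' → i' < N → ¬ I i' ≤ I i) :
    ∃ J : ℕ → Ideal (MvPolynomial (Fin (n + 2)) K),
      (∀ i < N ^ (c + 1), MonGen (J i) (j + c)) ∧
      ∀ i i', i < i' → i' < N ^ (c + 1) → ¬ J i' ≤ J i := by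
  classical
  have hS : ∀ i, ∃ S : Set (Fin n →₀ ℕ),
      i < N → ((∀ s ∈ S, (s.sum fun _ e => e) ≤ j) ∧
        I i = Ideal.span ((fun s => (MvPolynomial.monomial s (1 : K))) '' S)) := by
    intro i
    by_cases h : i < N
    · obtain ⟨S, h1, h2⟩ := hgen i h
      exact ⟨S, fun _ => ⟨h1, h2⟩⟩
    · exact ⟨∅, fun h' => absurd h' h⟩
  choose S hS using hS
  set D : ℕ → ℕ → ℕ := fun k i => i / N ^ (c - k) % N with hDdef
  set T : ℕ → Set (Fin (n + 2) →₀ ℕ) :=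
    fun i => ⋃ k ∈ Set.Iic c, embF n c k '' S (D k i) with hTdef
  refine ⟨fun i => Ideal.span ((fun s => (MvPolynomial.monomial s (1 : K))) '' T i), ?_, ?_⟩
  · intro i hi
    have hN : 0 < N := by
      rcases Nat.eq_zero_or_pos N with h | h
      · subst h; simp at hi
      · exact h
    refine ⟨T i, ?_, rfl⟩
    intro s hs
    simp only [hTdef, Set.mem_iUnion, Set.mem_Iic] at hs
    obtain ⟨k, hk, m, hm, rfl⟩ := hs
    have hDk : D k i < N := Nat.mod_lt _ hN
    have := (hS (D k i) hDk).1 m hm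
    rw [embF_sum c k hk]
    omega
  · intro i i' hlt hi' hle
    obtain ⟨t, htc, hdig⟩ := digit_lex hi' hlt
    set a := D t i with hadef
    set a' := D t i' with ha'def
    have hN : 0 < N := by
      rcases Nat.eq_zero_or_pos N with h | h
      · subst h; simp at hi'
      · exact h
    have ha' : a' < N := Nat.mod_lt _ hN
    have ha : a < N := Nat.mod_lt _ hN
    have haa' : a < a' := hdig
    obtain ⟨hSa'1, hSa'2⟩ := hS a' ha'
    obtain ⟨hSa1, hSa2⟩ := hS a ha
    -- a generator of `I a'` not in `I a`
    have hnotall : ¬ ∀ s ∈ S a', MvPolynomial.monomial s (1 : K) ∈ I a := by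
      intro h
      apply hbad a a' haa' ha'
      rw [hSa'2, Ideal.span_le]
      rintro p ⟨s, hs, rfl⟩
      exact h s hs
    push_neg at hnotall
    obtain ⟨m, hm, hmnot⟩ := hnotall
    have hmnot' : ¬ ∃ s ∈ S a, s ≤ m := by
      rintro ⟨s, hs, hsle⟩
      apply hmnot
      rw [hSa2]
      apply MvPolynomial.mem_ideal_span_monomial_image.mpr
      intro xi hxi
      simp only [MvPolynomial.support_monomial, if_neg (one_ne_zero (α := K)),
        Finset.mem_singleton] at hxi
      subst hxi
      exact ⟨s, hs, hsle⟩
    -- the witness monomial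
    have hmem : MvPolynomial.monomial (embF n c t m) (1 : K) ∈
        Ideal.span ((fun s => (MvPolynomial.monomial s (1 : K))) '' T i') := by
      apply Ideal.subset_span
      refine ⟨embF n c t m, ?_, rfl⟩
      simp only [hTdef, Set.mem_iUnion, Set.mem_Iic]
      exact ⟨t, htc, m, hm, rfl⟩
    have hmem' := hle hmem
    have hdom := MvPolynomial.mem_ideal_span_monomial_image.mp hmem' (embF n c t m) (by
      simp [MvPolynomial.support_monomial, (one_ne_zero (α := K))])
    obtain ⟨si, hsi, hsile⟩ := hdom
    simp only [hTdef, Set.mem_iUnion, Set.mem_Iic] at hsi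
    obtain ⟨k, hk, s, hsmem, rfl⟩ := hsi
    rw [Finsupp.le_def] at hsile
    have hu := hsile ⟨n, by omega⟩
    rw [embF_apply_u, embF_apply_u] at hu
    have hv := hsile ⟨n + 1, by omega⟩
    rw [embF_apply_v, embF_apply_v] at hv
    have hkt : k = t := by omega
    subst hkt
    apply hmnot'
    refine ⟨s, hsmem, ?_⟩
    rw [Finsupp.le_def]
    intro x
    have := hsile (Fin.castLE (Nat.le_add_right n 2) x)
    rwa [embF_apply_castLE, embF_apply_castLE] at this

end Construct

/-- `M_{d+2}^0(j + c) ≥ (M_d^0(j))^{c+1}`: moreover, a bad sequence of `M_d^0(j)`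
monomial ideals of degree `≤ j` in `d + 2` variables yields a bad sequence of
`(M_d^0(j))^{c+1}` monomial ideals of degree `≤ j + c` in `d + 4` variables. -/
theorem lowerBound_M0_step (K : Type*) [Field K] (d j c : ℕ) :
    (Mnum K d (fun _ => 0) j) ^ (c + 1) ≤ Mnum K (d + 2) (fun _ => 0) (j + c) ∧
    ((∃ I : ℕ → Ideal (MvPolynomial (Fin (d + 2)) K),
        (∀ i < Mnum K d (fun _ => 0) j, MonGen (I i) j) ∧
        ∀ i i', i < i' → i' < Mnum K d (fun _ => 0) j → ¬ I i' ≤ I i) →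
      ∃ J : ℕ → Ideal (MvPolynomial (Fin (d + 4)) K),
        (∀ i < (Mnum K d (fun _ => 0) j) ^ (c + 1), MonGen (J i) (j + c)) ∧
        ∀ i i', i < i' → i' < (Mnum K d (fun _ => 0) j) ^ (c + 1) → ¬ J i' ≤ J i) := by
  have main : ∀ (P : ℕ) (J : ℕ → Ideal (MvPolynomial (Fin (d + 2 + 2)) K)),
      (∀ i < P, MonGen (J i) (j + c)) → (∀ i i', i < i' → i' < P → ¬ J i' ≤ J i) →
      P ≤ Mnum K (d + 2) (fun _ => 0) (j + c) := by
    intro P J hg hb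
    obtain ⟨M, hM⟩ := exists_bound K (d + 2 + 2) (j + c)
    rw [Mnum]
    refine le_csInf ⟨M, ?_⟩ ?_
    · intro I hI
      exact hM I (fun i hi => by simpa using hI i hi)
    · intro b hb'
      by_contra hlt
      push_neg at hlt
      obtain ⟨i, j', h1, h2, h3⟩ := hb' J (fun i hi => by
        simpa using hg i (lt_of_le_of_lt hi hlt))
      exact hb i j' h1 (lt_of_le_of_lt h2 hlt) h3
  set N := Mnum K d (fun _ => 0) j with hNdef
  have part2 : (∃ I : ℕ → Ideal (MvPolynomial (Fin (d + 2)) K),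
        (∀ i < N, MonGen (I i) j) ∧
        ∀ i i', i < i' → i' < N → ¬ I i' ≤ I i) →
      ∃ J : ℕ → Ideal (MvPolynomial (Fin (d + 4)) K),
        (∀ i < N ^ (c + 1), MonGen (J i) (j + c)) ∧
        ∀ i i', i < i' → i' < N ^ (c + 1) → ¬ J i' ≤ J i := by
    rintro ⟨I, h1, h2⟩
    exact bad_construct N j c I h1 h2
  refine ⟨?_, part2⟩
  rcases Nat.eq_zero_or_pos N with h0 | hpos
  · rw [h0]
    simp
  · -- extract a bad sequence of length `N`
    have hnot : N - 1 ∉ {M | ∀ I : ℕ → Ideal (MvPolynomial (Fin (d + 2)) K),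
        (∀ i ≤ M, MonGen (I i) (j + (fun _ : ℕ => 0) i)) →
        ∃ i j', i < j' ∧ j' ≤ M ∧ I j' ≤ I i} := by
      apply Nat.notMem_of_lt_sInf
      have heq : N = sInf {M | ∀ I : ℕ → Ideal (MvPolynomial (Fin (d + 2)) K),
          (∀ i ≤ M, MonGen (I i) (j + (fun _ : ℕ => 0) i)) →
          ∃ i j', i < j' ∧ j' ≤ M ∧ I j' ≤ I i} := by rw [hNdef]; rfl
      rw [← heq]
      exact Nat.sub_lt hpos one_pos
    simp only [Set.mem_setOf_eq, not_forall] at hnot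
    obtain ⟨I, hI, hbad⟩ := hnot
    push_neg at hbad
    have hbad' : ∀ i i', i < i' → i' < N → ¬ I i' ≤ I i := by
      intro i i' h1 h2 h3
      exact hbad i i' h1 (by omega) h3
    have hI' : ∀ i < N, MonGen (I i) j := fun i hi => by
      simpa using hI i (by omega)
    obtain ⟨J, hJ1, hJ2⟩ := part2 ⟨I, hI', hbad'⟩
    exact main (N ^ (c + 1)) J hJ1 hJ2
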